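/- arXiv:1904.03844 — 3 statements merged into one kernel-verified Lean document; each statement's English description precedes it below -/
import Mathlib

section
/- Let M be a prime number, E a finite set, and n ≥ 1. For i = 1, …, n let s_i : E → {−1, 0, 1} ⊆ ℤ and define ℓ_i(f) = ∑_{e ∈ E} s_i(e) · f(e) ∈ ZMod M for f : E → ZMod M. Assume the staircase condition: there exist edges e_1, …, e_n ∈ E with s_i(e_i) ∈ {−1, 1} and s_j(e_i) = 0 for all j < i. Then the number of functions f : E → ZMod M such that ℓ_i(f) ≠ 0 for at least one i ∈ {1, …, n} equals M^{|E|} − M^{|E| − n}. Equivalently, the fraction of relocation arrangements under which the UAS becomes inactive is F_nou = 1 − 1/M^{n}. -/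
/-- For prime `M`, signed incidence vectors `s i : E → {-1,0,1}` of `n` basic cycles
satisfying the staircase condition, the number of relocation arrangements
`f : E → ZMod M` under which the UAS becomes inactive (some basic cycle has
`∑ e, s i e * f e ≠ 0`) is `M^|E| - M^(|E|-n)`, i.e. `F_nou = 1 - 1/Mⁿ`. -/
theorem stmt_3 (M : ℕ) (hM : M.Prime) (E : Type*) [Fintype E] (n : ℕ) (hn : 1 ≤ n)
    (s : Fin n → E → ℤ) (hs : ∀ i e, s i e = -1 ∨ s i e = 0 ∨ s i e = 1)
    (hstair : ∃ e : Fin n → E, ∀ i : Fin n,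
      (s i (e i) = 1 ∨ s i (e i) = -1) ∧ ∀ j : Fin n, j < i → s j (e i) = 0) :
    Nat.card {f : E → ZMod M // ∃ i : Fin n, ∑ e : E, (s i e : ZMod M) * f e ≠ 0}
      = M ^ Fintype.card E - M ^ (Fintype.card E - n) := by
  classical
  haveI : Fact M.Prime := ⟨hM⟩
  haveI : NeZero M := ⟨hM.ne_zero⟩
  obtain ⟨e, he⟩ := hstair
  set K := ZMod M
  -- the linear map collecting all the ℓ_i
  set L : (E → K) →ₗ[K] (Fin n → K) :=
    { toFun := fun f i => ∑ x : E, (s i x : K) * f x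
      map_add' := by
        intro f g; funext i
        simp [mul_add, Finset.sum_add_distrib]
      map_smul' := by
        intro c f; funext i
        simp [Finset.mul_sum, mul_left_comm]
        rw [Finset.mul_sum] } with hL
  have hLapp : ∀ (f : E → K) (i : Fin n), L f i = ∑ x : E, (s i x : K) * f x := fun _ _ => rfl
  -- e is injective, hence n ≤ |E|
  have heinj : Function.Injective e := by
    intro i j hij
    by_contra hne
    rcases lt_or_gt_of_ne (fun h : i = j => hne h) with h | h
    · have h0 := (he j).2 i h
      rw [← hij] at h0
      rcases (he i).1 with h1 | h1 <;> omega
    · have h0 := (he i).2 j h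
      rw [hij] at h0
      rcases (he j).1 with h1 | h1 <;> omega
  have hnE : n ≤ Fintype.card E := by
    simpa using Fintype.card_le_of_injective e heinj
  -- diagonal entries square to 1
  have hdiag : ∀ i : Fin n, (s i (e i) : K) * (s i (e i) : K) = 1 := by
    intro i
    rcases (he i).1 with h1 | h1 <;> rw [h1] <;> push_cast <;> ring
  -- surjectivity of L by triangular solving
  have key : ∀ k : ℕ, k ≤ n → ∀ w : Fin n → K,
      ∃ f : E → K, ∀ i : Fin n, (i : ℕ) < k → L f i = w i := by
    intro k
    induction k with
    | zero => intro _ w; exact ⟨0, fun i h => absurd h (Nat.not_lt_zero _)⟩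
    | succ k ih =>
      intro hk w
      obtain ⟨f, hf⟩ := ih (Nat.le_of_succ_le hk) w
      set i₀ : Fin n := ⟨k, hk⟩
      set δ : K := (s i₀ (e i₀) : K) * (w i₀ - L f i₀) with hδ
      refine ⟨f + Pi.single (e i₀) δ, ?_⟩
      have hstep : ∀ i : Fin n, L (f + Pi.single (e i₀) δ) i = L f i + (s i (e i₀) : K) * δ := by
        intro i
        rw [hLapp, hLapp]
        simp only [Pi.add_apply, mul_add, Finset.sum_add_distrib]
        congr 1
        rw [Fintype.sum_eq_single (e i₀) (fun x hx => by
          rw [Pi.single_eq_of_ne hx, mul_zero])]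
        rw [Pi.single_eq_same]
      intro i hi
      rcases Nat.lt_or_ge (i : ℕ) k with h | h
      · rw [hstep, (he i₀).2 i (by exact h)]
        push_cast
        rw [zero_mul, add_zero]
        exact hf i h
      · have : i = i₀ := Fin.ext (Nat.le_antisymm (Nat.lt_succ_iff.mp hi) h)
        subst this
        rw [hstep, hδ, ← mul_assoc, hdiag, one_mul]
        ring
  have hsurj : Function.Surjective L := by
    intro w
    obtain ⟨f, hf⟩ := key n le_rfl w
    exact ⟨f, funext fun i => hf i i.isLt⟩
  -- cardinalities
  have hK : Fintype.card K = M := ZMod.card M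
  have hcardV : Nat.card (E → K) = M ^ Fintype.card E := by
    rw [Nat.card_eq_fintype_card, Fintype.card_fun, hK]
  have hcardW : Nat.card (Fin n → K) = M ^ n := by
    rw [Nat.card_eq_fintype_card, Fintype.card_fun, hK, Fintype.card_fin]
  have hquot : Nat.card ((E → K) ⧸ LinearMap.ker L) = M ^ n := by
    have e1 : ((E → K) ⧸ LinearMap.ker L) ≃ₗ[K] LinearMap.range L := L.quotKerEquivRange
    have e2 : LinearMap.range L = ⊤ := LinearMap.range_eq_top.mpr hsurj
    rw [Nat.card_congr e1.toEquiv, e2, ← hcardW]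
    exact Nat.card_congr (Submodule.topEquiv.toEquiv)
  have hker : Nat.card (LinearMap.ker L) = M ^ (Fintype.card E - n) := by
    have h1 := AddSubgroup.card_eq_card_quotient_mul_card_addSubgroup
      (LinearMap.ker L).toAddSubgroup
    have h2 : Nat.card ((E → K) ⧸ (LinearMap.ker L).toAddSubgroup)
        = Nat.card ((E → K) ⧸ LinearMap.ker L) := rfl
    rw [hcardV, h2, hquot] at h1
    have hpos : 0 < M ^ n := pow_pos hM.pos n
    have : M ^ Fintype.card E = M ^ n * M ^ (Fintype.card E - n) := by
      rw [← pow_add, Nat.add_sub_cancel' hnE]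
    rw [this] at h1
    have h3 : Nat.card (LinearMap.ker L).toAddSubgroup = Nat.card (LinearMap.ker L) := rfl
    rw [h3] at h1
    exact (Nat.eq_of_mul_eq_mul_left hpos h1).symm
  -- the set in question is the complement of the kernel
  have hiff : ∀ f : E → K, (∃ i : Fin n, ∑ x : E, (s i x : K) * f x ≠ 0) ↔ ¬ (f ∈ LinearMap.ker L) := by
    intro f
    rw [LinearMap.mem_ker]
    constructor
    · rintro ⟨i, hi⟩ h0
      exact hi (by rw [← hLapp, h0]; rfl)
    · intro h
      by_contra hc
      push_neg at hc
      exact h (funext fun i => by rw [hLapp]; exact hc i)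
  have : Nat.card {f : E → ZMod M // ∃ i : Fin n, ∑ x : E, (s i x : ZMod M) * f x ≠ 0}
      = Nat.card {f : E → K // ¬ (f ∈ LinearMap.ker L)} :=
    Nat.card_congr (Equiv.subtypeEquivRight hiff)
  rw [this, Nat.card_eq_fintype_card, Fintype.card_subtype_compl]
  have c1 : Fintype.card (E → K) = M ^ Fintype.card E := by
    rw [← Nat.card_eq_fintype_card, hcardV]
  have c2 : Fintype.card {f : E → K // f ∈ LinearMap.ker L} = M ^ (Fintype.card E - n) := by
    rw [← Nat.card_eq_fintype_card, ← hker]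
  rw [c1, c2]
end

section
/- Let M be a prime number, E a finite set, and n ≥ 1. For i = 1, …, n let s_i : E → {−1, 0, 1} ⊆ ℤ and define ℓ_i(f) = ∑_{e ∈ E} s_i(e) · f(e) ∈ ZMod M for f : E → ZMod M. Assume the staircase condition: there exist edges e_1, …, e_n ∈ E with s_i(e_i) ∈ {−1, 1} and s_j(e_i) = 0 for all j < i. Let J ⊆ {1, …, n} and let P be a set of unordered pairs of distinct indices from {1, …, n}. For j ∈ J define A_j = {f : ℓ_j(f) ≠ 0 and ℓ_i(f) = 0 for all i ≠ j}, and for {j, k} ∈ P define B_{j,k} = {f : ℓ_j(f) ≠ 0, ℓ_j(f) + ℓ_k(f) = 0, and ℓ_i(f) = 0 for all i ∉ {j, k}}. Then: (i) the sets A_j (j ∈ J) and B_{j,k} ({j,k} ∈ P) are pairwise disjoint; and (ii) the number of functions f : E → ZMod M such that ℓ_i(f) ≠ 0 for at least one i but f lies in none of the sets A_j or B_{j,k} equals M^{|E|} − M^{|E| − n} − (|J| + |P|) · (M − 1) · M^{|E| − n}. Equivalently, the corresponding fraction of relocation arrangements is 1 − 1/M^n − (|J| + |P|)(M − 1)/M^n.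 -/
lemma aux_fiber_card_stmt7 {K V W : Type*} [Field K] [AddCommGroup V] [Module K V]
    [AddCommGroup W] [Module K W] [Fintype V] [Fintype W] [DecidableEq V] [DecidableEq W]
    (L : V →ₗ[K] W) (hL : Function.Surjective L) (S : Finset W) :
    Nat.card {f : V // L f ∈ S} = S.card * Nat.card (LinearMap.ker L) := by
  classical
  letI : Fintype (LinearMap.ker L) := Fintype.ofFinite _
  rw [Nat.card_eq_fintype_card (α := LinearMap.ker L)]
  have e1 : ∀ v : W, Fintype.card {f : V // L f = v} = Fintype.card (LinearMap.ker L) := by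
    intro v
    obtain ⟨f₀, hf₀⟩ := hL v
    refine Fintype.card_congr ⟨fun f => ⟨f.1 - f₀, ?_⟩, fun g => ⟨f₀ + g.1, ?_⟩, ?_, ?_⟩
    · simp [LinearMap.mem_ker, f.2, hf₀]
    · have := g.2
      simp only [LinearMap.mem_ker] at this
      simp [this, hf₀]
    · intro f; ext; simp
    · intro g; ext; simp
  rw [Nat.card_eq_fintype_card, Fintype.card_subtype]
  rw [Finset.card_eq_sum_card_fiberwise (f := L) (s := Finset.univ.filter (fun f => L f ∈ S)) (t := S)
    (fun f hf => (Finset.mem_filter.mp hf).2)]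
  have h2 : ∀ v ∈ S, ((Finset.univ.filter (fun f => L f ∈ S)).filter (fun f => L f = v)).card
      = Fintype.card (LinearMap.ker L) := by
    intro v hv
    rw [← e1 v, Fintype.card_subtype]
    congr 1
    ext f
    simp only [Finset.mem_filter, Finset.mem_univ, true_and]
    exact ⟨fun h => h.2, fun h => ⟨h ▸ hv, h⟩⟩
  rw [Finset.sum_congr rfl h2, Finset.sum_const, smul_eq_mul]

/-- Theorem 2, equation (15): for prime `M` and `n` basic cycles (signed incidence
vectors `s i : E → {-1,0,1}` with the staircase condition), given a set `J` of
indices and a set `P` of unordered pairs of distinct indices (encoded as ordered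
pairs `p` with `p.1 < p.2`), the sets `A j` (exactly basic cycle `j` inactive,
all others active) and `B p` (basic cycles `p.1, p.2` inactive with their sum
cycle active, all others active) are pairwise disjoint, and the number of
relocation arrangements making the UAS inactive while avoiding every `A j`
(`j ∈ J`) and every `B p` (`p ∈ P`) is
`M^|E| - M^(|E|-n) - (|J| + |P|)(M-1)M^(|E|-n)`, i.e. the fraction
`F_not = 1 - 1/Mⁿ - (|J|+|P|)(M-1)/Mⁿ`. -/
theorem stmt_7 (M : ℕ) (hM : M.Prime) (E : Type*) [Fintype E] (n : ℕ) (hn : 1 ≤ n)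
    (s : Fin n → E → ℤ) (hs : ∀ i e, s i e = -1 ∨ s i e = 0 ∨ s i e = 1)
    (hstair : ∃ e : Fin n → E, ∀ i : Fin n,
      (s i (e i) = 1 ∨ s i (e i) = -1) ∧ ∀ j : Fin n, j < i → s j (e i) = 0)
    (J : Finset (Fin n)) (P : Finset (Fin n × Fin n)) (hP : ∀ p ∈ P, p.1 < p.2)
    (ℓ : Fin n → (E → ZMod M) → ZMod M)
    (hℓ : ∀ i f, ℓ i f = ∑ e : E, (s i e : ZMod M) * f e)
    (A : Fin n → Set (E → ZMod M))
    (hA : ∀ j, A j = {f | ℓ j f ≠ 0 ∧ ∀ i : Fin n, i ≠ j → ℓ i f = 0})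
    (B : Fin n × Fin n → Set (E → ZMod M))
    (hB : ∀ p, B p = {f | ℓ p.1 f ≠ 0 ∧ ℓ p.1 f + ℓ p.2 f = 0 ∧
      ∀ i : Fin n, i ≠ p.1 → i ≠ p.2 → ℓ i f = 0}) :
    ((∀ j ∈ J, ∀ j' ∈ J, j ≠ j' → Disjoint (A j) (A j')) ∧
     (∀ p ∈ P, ∀ p' ∈ P, p ≠ p' → Disjoint (B p) (B p')) ∧
     (∀ j ∈ J, ∀ p ∈ P, Disjoint (A j) (B p))) ∧
    Nat.card {f : E → ZMod M //
        (∃ i : Fin n, ℓ i f ≠ 0) ∧ (∀ j ∈ J, f ∉ A j) ∧ (∀ p ∈ P, f ∉ B p)}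
      = M ^ Fintype.card E - M ^ (Fintype.card E - n)
          - (J.card + P.card) * ((M - 1) * M ^ (Fintype.card E - n)) := by
  classical
  haveI : Fact M.Prime := ⟨hM⟩
  obtain ⟨e, he⟩ := hstair
  -- Part (i): disjointness
  have hBne : ∀ p, ∀ f ∈ B p, ℓ p.2 f ≠ 0 := by
    intro p f hf h0
    rw [hB] at hf
    obtain ⟨h1, h2, -⟩ := hf
    rw [h0, add_zero] at h2
    exact h1 h2
  have part1 : (∀ j ∈ J, ∀ j' ∈ J, j ≠ j' → Disjoint (A j) (A j')) ∧
     (∀ p ∈ P, ∀ p' ∈ P, p ≠ p' → Disjoint (B p) (B p')) ∧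
     (∀ j ∈ J, ∀ p ∈ P, Disjoint (A j) (B p)) := by
    refine ⟨?_, ?_, ?_⟩
    · intro j _ j' _ hne
      rw [Set.disjoint_left]
      intro f hf hf'
      rw [hA] at hf hf'
      exact hf.1 (hf'.2 j hne)
    · intro p hp p' hp' hne
      rw [Set.disjoint_left]
      intro f hf hf'
      have h2f := hBne p f hf
      have h2f' := hBne p' f hf'
      rw [hB] at hf hf'
      have hlt := hP p hp
      have hlt' := hP p' hp'
      have m1 : p.1 = p'.1 ∨ p.1 = p'.2 := by
        by_contra h
        push_neg at h
        exact hf.1 (hf'.2.2 p.1 h.1 h.2)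
      have m2 : p.2 = p'.1 ∨ p.2 = p'.2 := by
        by_contra h
        push_neg at h
        exact h2f (hf'.2.2 p.2 h.1 h.2)
      apply hne
      rcases m1 with h1 | h1
      · rcases m2 with h2 | h2
        · exact absurd (h1 ▸ h2 ▸ hlt) (lt_irrefl _)
        · exact Prod.ext h1 h2
      · rcases m2 with h2 | h2
        · exact absurd (hlt.trans (h2 ▸ h1 ▸ hlt')) (lt_irrefl _)
        · exact absurd (h1 ▸ h2 ▸ hlt) (lt_irrefl _)
    · intro j _ p hp
      rw [Set.disjoint_left]
      intro f hf hf'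
      have h2f := hBne p f hf'
      rw [hB] at hf'
      rw [hA] at hf
      by_cases h1 : p.1 = j
      · have h2 : p.2 ≠ j := fun h => absurd (h1 ▸ h ▸ hP p hp) (lt_irrefl _)
        exact h2f (hf.2 p.2 h2)
      · exact hf'.1 (hf.2 p.1 h1)
  refine ⟨part1, ?_⟩
  -- injectivity of e
  have he_inj : Function.Injective e := by
    intro i j hij
    by_contra hne
    rcases lt_or_gt_of_ne hne with h | h
    · have := (he j).2 i h
      rw [← hij] at this
      rcases (he i).1 with h1 | h1 <;> rw [h1] at this <;> norm_num at this
    · have := (he i).2 j h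
      rw [hij] at this
      rcases (he j).1 with h1 | h1 <;> rw [h1] at this <;> norm_num at this
  have hnE : n ≤ Fintype.card E := by
    have := Fintype.card_le_of_injective e he_inj
    simpa using this
  -- the linear map
  set Amat : Matrix (Fin n) E (ZMod M) := Matrix.of (fun i x => ((s i x : ℤ) : ZMod M)) with hAmat
  set L : (E → ZMod M) →ₗ[ZMod M] (Fin n → ZMod M) := Amat.mulVecLin with hLdef
  have hLf : ∀ f i, ℓ i f = L f i := by
    intro f i
    rw [hℓ]
    simp [hLdef, Matrix.mulVecLin, Matrix.mulVec, dotProduct, hAmat]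
  -- triangular matrix
  set N : Matrix (Fin n) (Fin n) (ZMod M) := Matrix.of (fun i k => ((s i (e k) : ℤ) : ZMod M))
    with hNdef
  have hNtri : ∀ i k : Fin n, i < k → N i k = 0 := by
    intro i k h
    simp [hNdef, (he k).2 i h]
  have hNdiag : ∀ i : Fin n, N i i ≠ 0 := by
    intro i
    rcases (he i).1 with h1 | h1 <;> simp [hNdef, h1]
  have hdet : IsUnit N.det := by
    rw [Matrix.det_of_lowerTriangular N (by intro i j h; exact hNtri i j h)]
    rw [isUnit_iff_ne_zero]
    exact Finset.prod_ne_zero_iff.mpr (fun i _ => hNdiag i)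
  have hL_surj : Function.Surjective L := by
    intro v
    set c : Fin n → ZMod M := N⁻¹.mulVec v with hc
    have hNc : N.mulVec c = v := by
      rw [hc, Matrix.mulVec_mulVec, Matrix.mul_nonsing_inv _ hdet, Matrix.one_mulVec]
    refine ⟨fun x => ∑ k, if x = e k then c k else 0, ?_⟩
    funext i
    show ∑ x, Amat i x * (∑ k, if x = e k then c k else 0) = v i
    have : ∀ x, Amat i x * (∑ k, if x = e k then c k else 0)
        = ∑ k, if x = e k then Amat i x * c k else 0 := by
      intro x
      rw [Finset.mul_sum]
      exact Finset.sum_congr rfl (fun k _ => by split <;> simp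
        )
    rw [Finset.sum_congr rfl (fun x _ => this x), Finset.sum_comm]
    have h2 : ∀ k : Fin n, (∑ x, if x = e k then Amat i x * c k else 0) = N i k * c k := by
      intro k
      rw [Finset.sum_ite_eq' Finset.univ (e k) (fun x => Amat i x * c k)]
      simp [hNdef, hAmat]
    rw [Finset.sum_congr rfl (fun k _ => h2 k)]
    rw [← hNc]
    rfl
  haveI : NeZero M := ⟨hM.ne_zero⟩
  -- kernel cardinality
  have hker : Nat.card (LinearMap.ker L) = M ^ (Fintype.card E - n) := by
    have hrank := LinearMap.finrank_range_add_finrank_ker L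
    rw [LinearMap.range_eq_top.mpr hL_surj, finrank_top,
      Module.finrank_fintype_fun_eq_card, Module.finrank_fintype_fun_eq_card,
      Fintype.card_fin] at hrank
    have hkr : Module.finrank (ZMod M) (LinearMap.ker L) = Fintype.card E - n := by omega
    letI : Fintype (LinearMap.ker L) := Fintype.ofFinite _
    rw [Nat.card_eq_fintype_card, Module.card_eq_pow_finrank (K := ZMod M), ZMod.card, hkr]
  -- the target sets at the level of Fin n → ZMod M
  set FA : Fin n → Finset (Fin n → ZMod M) := fun j =>
    Finset.univ.filter (fun v => v j ≠ 0 ∧ ∀ i, i ≠ j → v i = 0) with hFA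
  set FB : Fin n × Fin n → Finset (Fin n → ZMod M) := fun p =>
    Finset.univ.filter (fun v => v p.1 ≠ 0 ∧ v p.1 + v p.2 = 0 ∧
      ∀ i, i ≠ p.1 → i ≠ p.2 → v i = 0) with hFB
  set Bad : Finset (Fin n → ZMod M) := insert 0 (J.biUnion FA ∪ P.biUnion FB) with hBadDef
  set Sset : Finset (Fin n → ZMod M) := Finset.univ \ Bad with hSset
  have hAiff : ∀ j f, f ∈ A j ↔ L f ∈ FA j := by
    intro j f
    rw [hA]
    simp [hFA, hLf f]
  have hBiff : ∀ p f, f ∈ B p ↔ L f ∈ FB p := by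
    intro p f
    rw [hB]
    simp [hFB, hLf f]
  have hzero : ∀ f, (∃ i, ℓ i f ≠ 0) ↔ L f ≠ 0 := by
    intro f
    rw [Function.ne_iff]
    simp [hLf f]
  have hmem : ∀ f : E → ZMod M,
      ((∃ i : Fin n, ℓ i f ≠ 0) ∧ (∀ j ∈ J, f ∉ A j) ∧ (∀ p ∈ P, f ∉ B p)) ↔ L f ∈ Sset := by
    intro f
    simp only [hzero f, hAiff, hBiff, hSset, Finset.mem_sdiff, Finset.mem_univ, true_and,
      hBadDef, Finset.mem_insert, Finset.mem_union, Finset.mem_biUnion, not_or, not_exists]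
    tauto
  rw [Nat.card_congr (Equiv.subtypeEquivRight hmem), aux_fiber_card_stmt7 L hL_surj Sset, hker]
  -- cardinalities of the basic sets
  have hWcard : Fintype.card (Fin n → ZMod M) = M ^ n := by
    simp [ZMod.card]
  have hFAcard : ∀ j, (FA j).card = M - 1 := by
    intro j
    have him : FA j = Finset.image (fun c => Pi.single j c)
        ((Finset.univ : Finset (ZMod M)).erase 0) := by
      ext v
      simp only [hFA, Finset.mem_filter, Finset.mem_univ, true_and, Finset.mem_image,
        Finset.mem_erase]
      constructor
      · rintro ⟨h1, h2⟩
        refine ⟨v j, ⟨h1, trivial⟩, ?_⟩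
        funext i
        by_cases hij : i = j
        · subst hij; simp
        · rw [Pi.single_eq_of_ne hij, h2 i hij]
      · rintro ⟨c, ⟨hc, -⟩, rfl⟩
        refine ⟨by simpa using hc, fun i hij => by simp [Pi.single_apply, hij]⟩
    rw [him, Finset.card_image_of_injective _ (Pi.single_injective j),
      Finset.card_erase_of_mem (Finset.mem_univ _), Finset.card_univ, ZMod.card]
  have hFBcard : ∀ p ∈ P, (FB p).card = M - 1 := by
    intro p hp
    have hne12 : p.1 ≠ p.2 := ne_of_lt (hP p hp)
    set g : ZMod M → (Fin n → ZMod M) :=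
      fun c i => if i = p.1 then c else if i = p.2 then -c else 0 with hg
    have him : FB p = Finset.image g ((Finset.univ : Finset (ZMod M)).erase 0) := by
      ext v
      simp only [hFB, Finset.mem_filter, Finset.mem_univ, true_and, Finset.mem_image,
        Finset.mem_erase]
      constructor
      · rintro ⟨h1, h2, h3⟩
        refine ⟨v p.1, ⟨h1, trivial⟩, ?_⟩
        funext i
        by_cases hi1 : i = p.1
        · subst hi1; simp [hg]
        · by_cases hi2 : i = p.2
          · subst hi2
            simp only [hg, if_neg hi1, if_pos rfl]
            exact (eq_neg_of_add_eq_zero_right h2).symm ▸ rfl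
          · simp [hg, hi1, hi2, h3 i hi1 hi2]
      · rintro ⟨c, ⟨hc, -⟩, rfl⟩
        refine ⟨by simpa [hg] using hc, ?_, ?_⟩
        · simp [hg, hne12.symm]
        · intro i hi1 hi2
          simp [hg, hi1, hi2]
    have hginj : Function.Injective g := by
      intro a b hab
      have := congrFun hab p.1
      simpa [hg] using this
    rw [him, Finset.card_image_of_injective _ hginj,
      Finset.card_erase_of_mem (Finset.mem_univ _), Finset.card_univ, ZMod.card]
  -- disjointness at the v-level
  have hFB2 : ∀ p, ∀ v ∈ FB p, v p.2 ≠ 0 := by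
    intro p v hv h0
    rw [hFB, Finset.mem_filter] at hv
    obtain ⟨-, h1, h2, -⟩ := hv
    rw [h0, add_zero] at h2
    exact h1 h2
  have hdJ : ∀ j ∈ J, ∀ j' ∈ J, j ≠ j' → Disjoint (FA j) (FA j') := by
    intro j _ j' _ hne
    rw [Finset.disjoint_left]
    intro v hv hv'
    rw [hFA, Finset.mem_filter] at hv hv'
    exact hv.2.1 (hv'.2.2 j hne)
  have hdP : ∀ p ∈ P, ∀ p' ∈ P, p ≠ p' → Disjoint (FB p) (FB p') := by
    intro p hp p' hp' hne
    rw [Finset.disjoint_left]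
    intro v hv hv'
    have h2v := hFB2 p v hv
    have h2v' := hFB2 p' v hv'
    rw [hFB, Finset.mem_filter] at hv hv'
    have hlt := hP p hp
    have hlt' := hP p' hp'
    have m1 : p.1 = p'.1 ∨ p.1 = p'.2 := by
      by_contra h
      push_neg at h
      exact hv.2.1 (hv'.2.2.2 p.1 h.1 h.2)
    have m2 : p.2 = p'.1 ∨ p.2 = p'.2 := by
      by_contra h
      push_neg at h
      exact h2v (hv'.2.2.2 p.2 h.1 h.2)
    apply hne
    rcases m1 with h1 | h1
    · rcases m2 with h2 | h2
      · exact absurd (h1 ▸ h2 ▸ hlt) (lt_irrefl _)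
      · exact Prod.ext h1 h2
    · rcases m2 with h2 | h2
      · exact absurd (hlt.trans (h2 ▸ h1 ▸ hlt')) (lt_irrefl _)
      · exact absurd (h1 ▸ h2 ▸ hlt) (lt_irrefl _)
  have hdJP : Disjoint (J.biUnion FA) (P.biUnion FB) := by
    rw [Finset.disjoint_left]
    intro v hv hv'
    rw [Finset.mem_biUnion] at hv hv'
    obtain ⟨j, -, hvj⟩ := hv
    obtain ⟨p, hp, hvp⟩ := hv'
    have h2v := hFB2 p v hvp
    rw [hFA, Finset.mem_filter] at hvj
    rw [hFB, Finset.mem_filter] at hvp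
    by_cases h1 : p.1 = j
    · have h2 : p.2 ≠ j := fun h => absurd (h1 ▸ h ▸ hP p hp) (lt_irrefl _)
      exact h2v (hvj.2.2 p.2 h2)
    · exact hvp.2.1 (hvj.2.2 p.1 h1)
  have h0 : (0 : Fin n → ZMod M) ∉ J.biUnion FA ∪ P.biUnion FB := by
    rw [Finset.mem_union, Finset.mem_biUnion, Finset.mem_biUnion]
    rintro (⟨j, -, hj⟩ | ⟨p, -, hp⟩)
    · rw [hFA, Finset.mem_filter] at hj
      exact hj.2.1 rfl
    · rw [hFB, Finset.mem_filter] at hp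
      exact hp.2.1 rfl
  have hBadCard : Bad.card = 1 + (J.card + P.card) * (M - 1) := by
    rw [hBadDef, Finset.card_insert_of_notMem h0, Finset.card_union_of_disjoint hdJP,
      Finset.card_biUnion hdJ, Finset.card_biUnion hdP,
      Finset.sum_congr rfl (fun j _ => hFAcard j), Finset.sum_congr rfl hFBcard,
      Finset.sum_const, Finset.sum_const, smul_eq_mul, smul_eq_mul]
    ring
  have hScard : Sset.card = M ^ n - (1 + (J.card + P.card) * (M - 1)) := by
    rw [hSset, Finset.card_sdiff_of_subset (Finset.subset_univ _), Finset.card_univ, hWcard, hBadCard]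
  rw [hScard]
  -- final arithmetic
  rw [Nat.sub_mul, ← pow_add, Nat.add_sub_cancel' hnE, add_mul, one_mul, mul_assoc,
    Nat.sub_sub]
end

section
/- Let M be a prime number, E a finite set, and n ≥ 1, and let A ≥ 1. Suppose there are A 'stand-alone' instances: for each g = 1, …, A there are coefficient functions s_{g,1}, …, s_{g,n} : E → {−1, 0, 1} ⊆ ℤ satisfying the staircase condition (there exist edges e_{g,1}, …, e_{g,n} with s_{g,i}(e_{g,i}) ∈ {−1, 1} and s_{g,j}(e_{g,i}) = 0 for all j < i), and the supports {e ∈ E : s_{g,i}(e) ≠ 0 for some i} of distinct instances g are pairwise disjoint. Define ℓ_{g,i}(f) = ∑_{e ∈ E} s_{g,i}(e) · f(e) ∈ ZMod M. Then ∑_{f : E → ZMod M} M · |{g ∈ {1, …, A} : ℓ_{g,i}(f) = 0 for all i = 1, …, n}| = A · M · M^{|E| − n}. Equivalently, averaging over all M^{|E|} relocation arrangements f, the average value of M times the number of instances remaining active is A · M / M^n. -/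
open Finset Matrix

lemma aux_ker_card (M : ℕ) (hM : M.Prime) (E : Type*) [Fintype E] [DecidableEq E]
    (n : ℕ) (t : Fin n → E → ℤ)
    (hstair : ∃ e : Fin n → E, ∀ i : Fin n,
      (t i (e i) = 1 ∨ t i (e i) = -1) ∧ ∀ j : Fin n, j < i → t j (e i) = 0) :
    haveI : NeZero M := ⟨hM.ne_zero⟩
    Nat.card {f : E → ZMod M // ∀ i : Fin n, ∑ e : E, (t i e : ZMod M) * f e = 0}
      = M ^ (Fintype.card E - n) := by
  haveI : NeZero M := ⟨hM.ne_zero⟩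
  obtain ⟨e, he⟩ := hstair
  -- e is injective
  have einj : Function.Injective e := by
    intro i j hij
    by_contra hne
    rcases lt_or_gt_of_ne (fun h => hne h) with h | h
    · have h1 := (he j).2 i h
      rw [← hij] at h1
      rcases (he i).1 with h2 | h2 <;> rw [h1] at h2 <;> simp at h2
    · have h1 := (he i).2 j h
      rw [hij] at h1
      rcases (he j).1 with h2 | h2 <;> rw [h1] at h2 <;> simp at h2
  have hle : n ≤ Fintype.card E := by
    simpa using Fintype.card_le_of_injective e einj
  -- the square matrix
  set B : Matrix (Fin n) (Fin n) (ZMod M) := fun i j => ((t i (e j) : ℤ) : ZMod M) with hB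
  have hBtri : B.BlockTriangular OrderDual.toDual := by
    intro i j hij
    have : (i : Fin n) < j := hij
    simp [hB, (he j).2 i this]
  have hdet : IsUnit B.det := by
    rw [Matrix.det_of_lowerTriangular B hBtri]
    apply IsUnit.of_mul_eq_one (∏ i : Fin n, B i i)
    rw [← Finset.prod_mul_distrib]
    apply Finset.prod_eq_one
    intro i _
    rcases (he i).1 with h | h <;> simp [hB, h]
  -- the linear map
  set L : (E → ZMod M) →ₗ[ZMod M] (Fin n → ZMod M) :=
    (Matrix.of fun i e' => ((t i e' : ℤ) : ZMod M)).mulVecLin with hL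
  have hLapp : ∀ f i, L f i = ∑ e' : E, ((t i e' : ℤ) : ZMod M) * f e' := by
    intro f i
    simp [hL, Matrix.mulVecLin_apply, Matrix.mulVec, dotProduct]
  -- L is surjective
  have hsurj : Function.Surjective L := by
    haveI := B.invertibleOfIsUnitDet hdet
    intro v
    set w : Fin n → ZMod M := B⁻¹.mulVec v with hw
    refine ⟨fun e' => ∑ j : Fin n, if e' = e j then w j else 0, ?_⟩
    funext i
    rw [hLapp]
    simp_rw [Finset.mul_sum, mul_ite, mul_zero]
    rw [Finset.sum_comm]
    have : ∀ j : Fin n, ∑ e' : E, (if e' = e j then ((t i e' : ℤ) : ZMod M) * w j else 0)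
        = B i j * w j := by
      intro j
      rw [Finset.sum_ite_eq' Finset.univ (e j) (fun e' => ((t i e' : ℤ) : ZMod M) * w j)]
      simp [hB]
    simp_rw [this]
    have : ∑ j : Fin n, B i j * w j = B.mulVec w i := rfl
    rw [this, hw, Matrix.mulVec_mulVec, Matrix.mul_inv_of_invertible, Matrix.one_mulVec]
  -- identify the subtype with the kernel
  have hcongr : Nat.card {f : E → ZMod M // ∀ i : Fin n, ∑ e' : E, (t i e' : ZMod M) * f e' = 0}
      = Nat.card (LinearMap.ker L) := by
    apply Nat.card_congr
    apply Equiv.subtypeEquivRight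
    intro f
    constructor
    · intro h
      ext i
      rw [hLapp]
      exact h i
    · intro h i
      have := congrFun h i
      rwa [hLapp] at this
  rw [hcongr]
  -- counting
  have hquot : Nat.card ((E → ZMod M) ⧸ LinearMap.ker L) = M ^ n := by
    rw [Nat.card_congr (LinearMap.quotKerEquivOfSurjective L hsurj).toEquiv]
    simp [Nat.card_eq_fintype_card, ZMod.card]
  have htot : Nat.card (E → ZMod M) = M ^ Fintype.card E := by
    simp [Nat.card_eq_fintype_card, ZMod.card]
  have hmul := AddSubgroup.card_eq_card_quotient_mul_card_addSubgroup
    (LinearMap.ker L).toAddSubgroup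
  have hq2 : Nat.card ((E → ZMod M) ⧸ (LinearMap.ker L).toAddSubgroup) = M ^ n := by
    rw [← hquot]
    rfl
  rw [htot, hq2] at hmul
  have hker2 : Nat.card (LinearMap.ker L) = Nat.card (LinearMap.ker L).toAddSubgroup := rfl
  rw [hker2]
  have hMpos : 0 < M ^ n := pow_pos hM.pos n
  have : M ^ n * M ^ (Fintype.card E - n) = M ^ n * Nat.card (LinearMap.ker L).toAddSubgroup := by
    rw [← pow_add, Nat.add_sub_cancel' hle, hmul]
  exact (Nat.eq_of_mul_eq_mul_left hMpos this).symm

/-- Equation (19): for prime `M` and `A` stand-alone instances of a UAS with `n`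
basic cycles each (signed incidence vectors `s g i : E → {-1,0,1}` satisfying the
staircase condition, with pairwise disjoint edge supports for distinct instances),
summing over all `M^|E|` relocation arrangements `f : E → ZMod M` the quantity
`M` times the number of instances staying active gives `A · M · M^(|E|-n)`;
i.e. the average number of instances in the MD code is `Ā_MD = A · F₀ · M` with
`F₀ = 1/Mⁿ`. -/
theorem stmt_10 (M : ℕ) (hM : M.Prime) (E : Type*) [Fintype E] [DecidableEq E] (n : ℕ) (hn : 1 ≤ n)
    (A : ℕ) (hA : 1 ≤ A) (s : Fin A → Fin n → E → ℤ)
    (hs : ∀ g i e, s g i e = -1 ∨ s g i e = 0 ∨ s g i e = 1)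
    (hstair : ∀ g : Fin A, ∃ e : Fin n → E, ∀ i : Fin n,
      (s g i (e i) = 1 ∨ s g i (e i) = -1) ∧ ∀ j : Fin n, j < i → s g j (e i) = 0)
    (hdisj : ∀ g g' : Fin A, g ≠ g' →
      Disjoint {e : E | ∃ i : Fin n, s g i e ≠ 0} {e : E | ∃ i : Fin n, s g' i e ≠ 0}) :
    (haveI : NeZero M := ⟨hM.ne_zero⟩
     ∑ f : E → ZMod M,
       M * Nat.card {g : Fin A // ∀ i : Fin n, ∑ e : E, (s g i e : ZMod M) * f e = 0})
      = A * M * M ^ (Fintype.card E - n) := by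
  haveI : NeZero M := ⟨hM.ne_zero⟩
  have key : ∀ g : Fin A,
      Nat.card {f : E → ZMod M // ∀ i : Fin n, ∑ e : E, (s g i e : ZMod M) * f e = 0}
        = M ^ (Fintype.card E - n) := fun g => aux_ker_card M hM E n (s g) (hstair g)
  classical
  calc ∑ f : E → ZMod M,
        M * Nat.card {g : Fin A // ∀ i : Fin n, ∑ e : E, (s g i e : ZMod M) * f e = 0}
      = M * ∑ f : E → ZMod M,
        ∑ g : Fin A, if (∀ i : Fin n, ∑ e : E, (s g i e : ZMod M) * f e = 0) then 1 else 0 := by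
        rw [Finset.mul_sum]
        congr 1; funext f
        congr 1
        rw [Nat.card_eq_fintype_card, Fintype.card_subtype, Finset.card_eq_sum_ones]
        rw [Finset.sum_filter]
    _ = M * ∑ g : Fin A, ∑ f : E → ZMod M,
        if (∀ i : Fin n, ∑ e : E, (s g i e : ZMod M) * f e = 0) then 1 else 0 := by
        rw [Finset.sum_comm]
    _ = M * ∑ g : Fin A, M ^ (Fintype.card E - n) := by
        congr 1
        apply Finset.sum_congr rfl
        intro g _
        rw [← key g, Nat.card_eq_fintype_card, Fintype.card_subtype, Finset.card_eq_sum_ones,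
          Finset.sum_filter]
    _ = A * M * M ^ (Fintype.card E - n) := by
        rw [Finset.sum_const, Finset.card_univ, Fintype.card_fin, smul_eq_mul]
        ring
end
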